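/- Let α > 0 and r ∈ ℝ with r > 0. Then lim_{x→0⁺} (∫₀ˣ s^α (log(1/s))^r ds) / (x^{1+α} (log(1/x))^r) = 1/(1+α). -/

import Mathlib

open Real Filter Set intervalIntegral

private lemma key_tendsto (c r : ℝ) (hc : 0 < c) :
    Tendsto (fun x : ℝ => x ^ c * (Real.log (1/x)) ^ r)
      (nhdsWithin 0 (Set.Ioi 0)) (nhds 0) := by
  have hL : Tendsto (fun x : ℝ => Real.log (1/x)) (nhdsWithin 0 (Set.Ioi 0)) atTop := by
    have h1 : Tendsto (fun x : ℝ => -Real.log x) (nhdsWithin 0 (Set.Ioi 0)) atTop :=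
      tendsto_neg_atTop_iff.mpr Real.tendsto_log_nhdsGT_zero
    refine h1.congr fun x => ?_
    rw [one_div, Real.log_inv]
  have h2 := (tendsto_rpow_mul_exp_neg_mul_atTop_nhds_zero r c hc).comp hL
  refine h2.congr' ?_
  filter_upwards [self_mem_nhdsWithin] with x (hx : 0 < x)
  simp only [Function.comp]
  rw [one_div, Real.log_inv, neg_mul_neg, mul_comm c (Real.log x),
    ← Real.rpow_def_of_pos hx, mul_comm]

theorem stmt_5 (α r : ℝ) (hα : 0 < α) (hr : 0 < r) :
    Filter.Tendsto (fun x : ℝ =>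
        (∫ s in (0:ℝ)..x, s ^ α * (Real.log (1/s)) ^ r) /
          (x ^ (1+α) * (Real.log (1/x)) ^ r))
      (nhdsWithin 0 (Set.Ioi 0)) (nhds (1/(1+α))) := by
  set b : ℝ := Real.exp (-(r/(1+α)+1)) with hb_def
  have hb0 : 0 < b := Real.exp_pos _
  have h1α : (0:ℝ) < 1 + α := by linarith
  set h : ℝ → ℝ := fun s => s ^ α * (Real.log (1/s)) ^ r with hh_def
  -- basic facts for x ∈ Ioo 0 b
  have hLpos : ∀ x ∈ Set.Ioo (0:ℝ) b, r/(1+α)+1 < Real.log (1/x) := by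
    intro x hx
    rw [one_div, Real.log_inv]
    have := Real.log_lt_log hx.1 hx.2
    rw [hb_def, Real.log_exp] at this
    linarith
  have hcont : ∀ x : ℝ, x ≠ 0 → ContinuousAt h x := by
    intro x hx
    exact ((Real.continuousAt_rpow_const x α (Or.inl hx)).mul
      (((Real.continuousAt_log (by simpa using inv_ne_zero hx)).comp
        ((continuousAt_const.div continuousAt_id hx))).rpow_const (Or.inr hr.le)))
  have h0 : h 0 = 0 := by
    simp [hh_def, Real.zero_rpow hα.ne', Real.zero_rpow hr.ne']
  have hcontOn : ContinuousOn h (Set.Icc 0 b) := by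
    intro s hs
    rcases eq_or_ne s 0 with rfl | hs0
    · rw [ContinuousWithinAt, h0]
      have hsub : Set.Icc (0:ℝ) b ⊆ insert 0 (Set.Ioi 0) := by
        intro y hy
        rcases eq_or_lt_of_le hy.1 with h' | h'
        · exact Or.inl h'.symm
        · exact Or.inr h'
      refine Tendsto.mono_left ?_ (nhdsWithin_mono _ hsub)
      rw [nhdsWithin_insert]
      refine Tendsto.sup ?_ (key_tendsto α r hα)
      have := tendsto_pure_nhds h 0
      rwa [h0] at this
    · exact (hcont s hs0).continuousWithinAt
  -- derivative of numerator
  have hfderiv : ∀ x ∈ Set.Ioo (0:ℝ) b,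
      HasDerivAt (fun u => ∫ s in (0:ℝ)..u, h s) (h x) x := by
    intro x hx
    refine intervalIntegral.integral_hasDerivAt_right ?_ ?_ (hcont x hx.1.ne')
    · exact (hcontOn.mono (by
        rw [Set.uIcc_of_le hx.1.le]
        exact Set.Icc_subset_Icc le_rfl hx.2.le)).intervalIntegrable
    · exact (continuousOn_of_forall_continuousAt
        (fun y (hy : y ∈ Set.Ioi (0:ℝ)) => hcont y (ne_of_gt hy))).stronglyMeasurableAtFilter
        isOpen_Ioi x hx.1
  -- derivative of denominator
  set G' : ℝ → ℝ := fun x =>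
    x ^ α * ((1+α) * Real.log (1/x) - r) * (Real.log (1/x)) ^ (r-1) with hG'_def
  have hgeq : (fun x : ℝ => x ^ (1+α) * (Real.log (1/x)) ^ r)
      = fun x : ℝ => x ^ (1+α) * (-Real.log x) ^ r := by
    funext x; rw [one_div, Real.log_inv]
  have hgderiv : ∀ x ∈ Set.Ioo (0:ℝ) b,
      HasDerivAt (fun x : ℝ => x ^ (1+α) * (Real.log (1/x)) ^ r) (G' x) x := by
    intro x hx
    have hx0 : 0 < x := hx.1
    have hL : r/(1+α)+1 < Real.log (1/x) := hLpos x hx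
    have hLx : 0 < -Real.log x := by
      rw [one_div, Real.log_inv] at hL
      have : (0:ℝ) < r/(1+α)+1 := by positivity
      linarith
    have d1 : HasDerivAt (fun x : ℝ => x ^ (1+α)) ((1+α) * x ^ α) x := by
      have := Real.hasDerivAt_rpow_const (p := 1+α) (Or.inl hx0.ne')
      simpa [add_sub_cancel_left] using this
    have d2 : HasDerivAt (fun x : ℝ => (-Real.log x) ^ r)
        (-x⁻¹ * r * (-Real.log x) ^ (r-1)) x :=
      ((Real.hasDerivAt_log hx0.ne').neg).rpow_const (Or.inl hLx.ne')
    have := d1.mul d2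
    rw [hgeq]
    refine this.congr_deriv (Eq.symm ?_)
    rw [hG'_def]
    simp only [one_div, Real.log_inv]
    have e1 : x ^ (1+α) = x * x ^ α := by
      rw [Real.rpow_add hx0, Real.rpow_one]
    have e2 : (-Real.log x) ^ r = (-Real.log x) ^ (r-1) * (-Real.log x) := by
      rw [← Real.rpow_add_one hLx.ne', sub_add_cancel]
    rw [e1, e2]
    have hxx : x * x⁻¹ = 1 := mul_inv_cancel₀ hx0.ne'
    linear_combination (r * x ^ α * (-Real.log x) ^ (r-1)) * hxx
  -- g' nonzero
  have hDpos : ∀ x ∈ Set.Ioo (0:ℝ) b, 0 < (1+α) * Real.log (1/x) - r := by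
    intro x hx
    have hL := hLpos x hx
    have : (1+α) * (r/(1+α)+1) < (1+α) * Real.log (1/x) :=
      (mul_lt_mul_iff_right₀ h1α).mpr hL
    rw [mul_add, mul_div_cancel₀ _ h1α.ne', mul_one] at this
    linarith
  have hL0 : ∀ x ∈ Set.Ioo (0:ℝ) b, 0 < Real.log (1/x) := by
    intro x hx
    have := hLpos x hx
    have h2 : (0:ℝ) < r/(1+α)+1 := by positivity
    linarith
  have hg'ne : ∀ x ∈ Set.Ioo (0:ℝ) b, G' x ≠ 0 := by
    intro x hx
    have h1 : 0 < x ^ α := Real.rpow_pos_of_pos hx.1 α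
    have h2 := hDpos x hx
    have h3 : 0 < (Real.log (1/x)) ^ (r-1) := Real.rpow_pos_of_pos (hL0 x hx) _
    exact ne_of_gt (by positivity)
  -- numerator tends to 0
  have hfa : Tendsto (fun x => ∫ s in (0:ℝ)..x, h s)
      (nhdsWithin 0 (Set.Ioi 0)) (nhds 0) := by
    obtain ⟨C, hC⟩ :=
      (isCompact_Icc : IsCompact (Set.Icc (0:ℝ) b)).exists_bound_of_continuousOn hcontOn
    refine squeeze_zero_norm' (a := fun x => C * |x - 0|) ?_ ?_
    · filter_upwards [Ioo_mem_nhdsGT_of_mem (Set.left_mem_Ico.mpr hb0)] with x hx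
      refine intervalIntegral.norm_integral_le_of_norm_le_const fun y hy => ?_
      rw [Set.uIoc_of_le hx.1.le] at hy
      exact hC y ⟨hy.1.le, hy.2.trans hx.2.le⟩
    · have : Tendsto (fun x : ℝ => C * |x - 0|) (nhds 0) (nhds (C * |(0:ℝ) - 0|)) := by
        exact (continuous_const.mul (continuous_abs.comp (continuous_id.sub continuous_const))).tendsto 0
      simpa using this.mono_left nhdsWithin_le_nhds
  -- denominator tends to 0
  have hga := key_tendsto (1+α) r h1α
  -- limit of f'/g'
  have hL : Tendsto (fun x : ℝ => Real.log (1/x)) (nhdsWithin 0 (Set.Ioi 0)) atTop := by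
    have h1 : Tendsto (fun x : ℝ => -Real.log x) (nhdsWithin 0 (Set.Ioi 0)) atTop :=
      tendsto_neg_atTop_iff.mpr Real.tendsto_log_nhdsGT_zero
    refine h1.congr fun x => ?_
    rw [one_div, Real.log_inv]
  have hdiv : Tendsto (fun x => h x / G' x) (nhdsWithin 0 (Set.Ioi 0))
      (nhds (1/(1+α))) := by
    have hT : Tendsto (fun x : ℝ => ((1+α) - r * (Real.log (1/x))⁻¹)⁻¹)
        (nhdsWithin 0 (Set.Ioi 0)) (nhds (1/(1+α))) := by
      have hinner : Tendsto (fun x : ℝ => (1+α) - r * (Real.log (1/x))⁻¹)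
          (nhdsWithin 0 (Set.Ioi 0)) (nhds (1+α)) := by
        have := (hL.inv_tendsto_atTop).const_mul r
        have h2 := tendsto_const_nhds (α := ℝ) (x := 1+α)
          (f := nhdsWithin (0:ℝ) (Set.Ioi 0)) |>.sub this
        simpa using h2
      have := hinner.inv₀ h1α.ne'
      simpa [one_div] using this
    refine hT.congr' ?_
    filter_upwards [Ioo_mem_nhdsGT_of_mem (Set.left_mem_Ico.mpr hb0)] with x hx
    have hx0 : 0 < x := hx.1
    have hLx : 0 < Real.log (1/x) := hL0 x hx
    have hD : 0 < (1+α) * Real.log (1/x) - r := hDpos x hx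
    have hxα : (0:ℝ) < x ^ α := Real.rpow_pos_of_pos hx0 α
    have hLr : (0:ℝ) < (Real.log (1/x)) ^ (r-1) := Real.rpow_pos_of_pos hLx _
    have e2 : (Real.log (1/x)) ^ r = (Real.log (1/x)) ^ (r-1) * Real.log (1/x) := by
      rw [← Real.rpow_add_one hLx.ne', sub_add_cancel]
    show ((1+α) - r * (Real.log (1/x))⁻¹)⁻¹ = h x / G' x
    rw [hh_def, hG'_def]
    simp only
    rw [e2]
    have hD' : ((1+α) - r * (Real.log (1/x))⁻¹) ≠ 0 := by
      have : (1+α) - r * (Real.log (1/x))⁻¹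
          = ((1+α) * Real.log (1/x) - r) / Real.log (1/x) := by
        field_simp
      rw [this]
      positivity
    field_simp
  have := HasDerivAt.lhopital_zero_right_on_Ioo hb0 hfderiv hgderiv hg'ne hfa hga hdiv
  exact this
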